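/- For all reals b ≥ 1, d ∈ (0,1), integer n ≥ 1, and integer k with n(1 - (1/b)ln((b+d-bd)/d)) + 1 < k ≤ n, setting α_k = (1 - e^{b((k-1)/n - 1)})·(b+d-bd)/b and α_{k+1} = (1 - e^{b(k/n - 1)})·(b+d-bd)/b, we have (b + d - bd - b·α_k)/n - α_k + α_{k+1} ≥ -b(b+d-bd)/n². -/

import Mathlib

set_option maxHeartbeats 1000000 in
theorem stmt_13 (b d : ℝ) (hb : 1 ≤ b) (hd : d ∈ Set.Ioo (0:ℝ) 1)
    (n k : ℕ) (hn : 1 ≤ n)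
    (hk1 : (n : ℝ) * (1 - (1/b) * Real.log ((b + d - b*d)/d)) + 1 < k) (hk2 : k ≤ n) :
    (b + d - b*d - b * ((1 - Real.exp (b * ((k - 1 : ℝ)/n - 1))) * (b + d - b*d)/b)) / n
      - (1 - Real.exp (b * ((k - 1 : ℝ)/n - 1))) * (b + d - b*d)/b
      + (1 - Real.exp (b * ((k : ℝ)/n - 1))) * (b + d - b*d)/b
    ≥ -(b * (b + d - b*d)) / n ^ 2 := by
  obtain ⟨hd0, hd1⟩ := hd
  have hb0 : (0:ℝ) < b := lt_of_lt_of_le one_pos hb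
  have hn0 : (0:ℝ) < (n:ℝ) := by exact_mod_cast hn
  have hbne : b ≠ 0 := ne_of_gt hb0
  have hnne : (n:ℝ) ≠ 0 := ne_of_gt hn0
  have hC0 : 0 < b + d - b*d := by nlinarith
  set t := b / n with ht
  have ht0 : 0 < t := div_pos hb0 hn0
  set E := Real.exp (b * (((k:ℝ) - 1)/n - 1)) with hE
  have hE0 : 0 < E := Real.exp_pos _
  have hEF : Real.exp (b * ((k:ℝ)/n - 1)) = E * Real.exp t := by
    rw [hE, ht, ← Real.exp_add]
    congr 1
    field_simp
    ring
  have hkn : (k:ℝ) ≤ n := by exact_mod_cast hk2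
  have h1' : b * (((k:ℝ) - 1)/n - 1) ≤ -t := by
    have h1 : ((k:ℝ) - 1)/n - 1 ≤ ((n:ℝ) - 1)/n - 1 := by gcongr <;> linarith
    have h2 : b * (((k:ℝ) - 1)/n - 1) ≤ b * (((n:ℝ) - 1)/n - 1) :=
      mul_le_mul_of_nonneg_left h1 hb0.le
    have h3 : b * (((n:ℝ) - 1)/n - 1) = -t := by rw [ht]; field_simp; ring
    linarith
  have hE1 : E ≤ Real.exp (-t) := by
    rw [hE]; exact Real.exp_le_exp.2 h1'
  have hexp1 : 1 - t ≤ Real.exp (-t) := by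
    have := Real.add_one_le_exp (-t); linarith
  have hexp2 : 1 + t ≤ Real.exp t := by
    have := Real.add_one_le_exp t; linarith
  have hmul : Real.exp (-t) * Real.exp t = 1 := by
    rw [← Real.exp_add]; simp
  have hF0 : 0 < Real.exp t := Real.exp_pos t
  have hkey : E * (Real.exp t - 1 - t) ≤ t ^ 2 := by
    have h3 : 0 ≤ Real.exp t - 1 - t := by linarith
    have h4 : Real.exp (-t) * (Real.exp t - 1 - t) ≤ t ^ 2 := by
      nlinarith [mul_nonneg (sub_nonneg.2 hexp1) (by linarith : (0:ℝ) ≤ 1 + t)]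
    nlinarith [mul_le_mul_of_nonneg_right hE1 h3]
  rw [hEF]
  rw [ge_iff_le, ← sub_nonneg]
  have expand : (b + d - b*d - b * ((1 - E) * (b + d - b*d)/b)) / n
      - (1 - E) * (b + d - b*d)/b
      + (1 - E * Real.exp t) * (b + d - b*d)/b
      - (-(b * (b + d - b*d)) / n ^ 2)
      = (b + d - b*d) / (b * n^2) * (b^2 + n*b*E - n^2 * (E * (Real.exp t - 1 - t))
          - n^2 * E * t) := by
    rw [ht]
    field_simp
    ring
  rw [expand]
  apply mul_nonneg (by positivity)
  have h5 : n^2 * (E * (Real.exp t - 1 - t)) ≤ n^2 * t^2 := by nlinarith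
  have ht2 : (n:ℝ)^2 * t^2 = b^2 := by rw [ht]; field_simp
  have ht3 : (n:ℝ)^2 * E * t = n * b * E := by rw [ht]; field_simp
  nlinarith
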